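/- Let j be a positive integer and s_1, a_1, s_2, a_2 integers such that for all integers n, C(n) = C(n - s_1 - C(n - a_1)) + C(n - s_2 - C(n - a_2)). Then j divides s_1 and s_2, a_1 \equiv j (mod 2j), a_2 \equiv j (mod 2j), and 2(s_1 + s_2) = a_1 + a_2. -/
import Mathlib

def C (j : ℕ) (n : ℤ) : ℤ := ∑ i ∈ Finset.range j, ⌈((n : ℚ) - i) / (2 * j)⌉

lemma ind_sum (k : ℕ) (r : ℤ) (hr : 0 ≤ r) :
    (∑ i ∈ Finset.range k, (if (i : ℤ) < r then (1:ℤ) else 0)) = min r k := by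
  induction k with
  | zero => simp; omega
  | succ k ih =>
    rw [Finset.sum_range_succ, ih]
    push_cast
    split <;> omega

lemma C_eq (j : ℕ) (hj : 0 < j) (n : ℤ) :
    C j n = (j : ℤ) * (n / (2*j)) + min (n % (2*j)) j := by
  have hb : (0:ℤ) < 2*j := by positivity
  have hr0 : 0 ≤ n % (2*(j:ℤ)) := Int.emod_nonneg n (ne_of_gt hb)
  have hrb : n % (2*(j:ℤ)) < 2*j := Int.emod_lt_of_pos n hb
  have hd : 2*(j:ℤ) * (n / (2*j)) + n % (2*j) = n := Int.mul_ediv_add_emod n (2*j)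
  set q := n / (2*(j:ℤ)) with hqdef
  set r := n % (2*(j:ℤ)) with hrdef
  have hterm : ∀ i ∈ Finset.range j,
      ⌈((n : ℚ) - i) / (2 * j)⌉ = q + (if (i:ℤ) < r then (1:ℤ) else 0) := by
    intro i hi
    simp only [Finset.mem_range] at hi
    have hiZ : (i:ℤ) < (j:ℤ) := by exact_mod_cast hi
    have hbq : (0:ℚ) < 2*(j:ℚ) := by positivity
    by_cases hc : (i:ℤ) < r
    · rw [if_pos hc, Int.ceil_eq_iff]
      have k1 : q * (2*(j:ℤ)) < n - i := by linarith
      have k2 : n - (i:ℤ) ≤ (q + 1) * (2*(j:ℤ)) := by linarith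
      have k1Q : (q:ℚ) * (2*(j:ℚ)) < (n:ℚ) - (i:ℚ) := by exact_mod_cast k1
      have k2Q : (n:ℚ) - (i:ℚ) ≤ ((q:ℚ) + 1) * (2*(j:ℚ)) := by exact_mod_cast k2
      constructor
      · rw [lt_div_iff₀ hbq]; push_cast; linarith
      · rw [div_le_iff₀ hbq]; push_cast; linarith
    · rw [if_neg hc, Int.ceil_eq_iff]
      have k1 : (q - 1) * (2*(j:ℤ)) < n - i := by nlinarith
      have k2 : n - (i:ℤ) ≤ q * (2*(j:ℤ)) := by linarith [not_lt.mp hc]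
      have k1Q : ((q:ℚ) - 1) * (2*(j:ℚ)) < (n:ℚ) - (i:ℚ) := by exact_mod_cast k1
      have k2Q : (n:ℚ) - (i:ℚ) ≤ (q:ℚ) * (2*(j:ℚ)) := by exact_mod_cast k2
      constructor
      · rw [lt_div_iff₀ hbq]; push_cast; linarith
      · rw [div_le_iff₀ hbq]; push_cast; linarith
  unfold C
  rw [Finset.sum_congr rfl hterm, Finset.sum_add_distrib, Finset.sum_const,
    ind_sum j r hr0, Finset.card_range]
  ring

lemma C_shift (j : ℕ) (hj : 0 < j) (n t : ℤ) : C j (n + 2*j*t) = C j n + j*t := by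
  have hb : (0:ℤ) < 2*j := by positivity
  rw [C_eq j hj, C_eq j hj]
  have h1 : (n + 2*(j:ℤ)*t) / (2*j) = n / (2*j) + t := by
    rw [show n + 2*(j:ℤ)*t = n + t*(2*j) by ring, Int.add_mul_ediv_right n t (ne_of_gt hb)]
  have h2 : (n + 2*(j:ℤ)*t) % (2*j) = n % (2*j) := by
    rw [show n + 2*(j:ℤ)*t = n + t*(2*j) by ring, Int.add_mul_emod_self_right]
  rw [h1, h2]; ring

lemma C_hermite (j : ℕ) (hj : 0 < j) (n : ℤ) : C j n + C j (n - j) = n := by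
  have hb : (0:ℤ) < 2*j := by positivity
  have hr0 : 0 ≤ n % (2*(j:ℤ)) := Int.emod_nonneg n (ne_of_gt hb)
  have hrb : n % (2*(j:ℤ)) < 2*j := Int.emod_lt_of_pos n hb
  have hd : 2*(j:ℤ) * (n / (2*j)) + n % (2*j) = n := Int.mul_ediv_add_emod n (2*j)
  set q := n / (2*(j:ℤ)) with hqdef
  set r := n % (2*(j:ℤ)) with hrdef
  rw [C_eq j hj, C_eq j hj]
  rcases le_or_gt (j:ℤ) r with hc | hc
  · have h2 : (n - j) / (2*(j:ℤ)) = q ∧ (n - j) % (2*(j:ℤ)) = r - j :=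
      (Int.ediv_emod_unique hb).mpr ⟨by linarith, by omega, by omega⟩
    rw [h2.1, h2.2]
    have e1 : min r (j:ℤ) = j := by omega
    have e2 : min (r - (j:ℤ)) (j:ℤ) = r - j := by omega
    rw [e1, e2]; linarith
  · have h2 : (n - j) / (2*(j:ℤ)) = q - 1 ∧ (n - j) % (2*(j:ℤ)) = r + j :=
      (Int.ediv_emod_unique hb).mpr ⟨by linarith, by omega, by omega⟩
    rw [h2.1, h2.2]
    have e1 : min r (j:ℤ) = r := by omega
    have e2 : min (r + (j:ℤ)) (j:ℤ) = j := by omega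
    rw [e1, e2]; nlinarith [hd]

lemma C_E (j : ℕ) (hj : 0 < j) (n : ℤ) :
    2 * C j n - n = 2 * min (n % (2*j)) (j:ℤ) - n % (2*j) := by
  have hd : 2*(j:ℤ) * (n / (2*j)) + n % (2*j) = n := Int.mul_ediv_add_emod n (2*j)
  rw [C_eq j hj]; linarith

lemma E_bounds (j : ℕ) (hj : 0 < j) (n : ℤ) : 0 ≤ 2 * C j n - n ∧ 2 * C j n - n ≤ j := by
  have hb : (0:ℤ) < 2*j := by positivity
  have hr0 : 0 ≤ n % (2*(j:ℤ)) := Int.emod_nonneg n (ne_of_gt hb)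
  have hrb : n % (2*(j:ℤ)) < 2*j := Int.emod_lt_of_pos n hb
  rw [C_E j hj]; omega

lemma E_eq_zero (j : ℕ) (hj : 0 < j) (n : ℤ) : 2 * C j n - n = 0 ↔ n % (2*j) = 0 := by
  have hb : (0:ℤ) < 2*j := by positivity
  have hr0 : 0 ≤ n % (2*(j:ℤ)) := Int.emod_nonneg n (ne_of_gt hb)
  have hrb : n % (2*(j:ℤ)) < 2*j := Int.emod_lt_of_pos n hb
  rw [C_E j hj]; omega

lemma E_eq_j (j : ℕ) (hj : 0 < j) (n : ℤ) : 2 * C j n - n = j ↔ n % (2*j) = j := by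
  have hb : (0:ℤ) < 2*j := by positivity
  have hr0 : 0 ≤ n % (2*(j:ℤ)) := Int.emod_nonneg n (ne_of_gt hb)
  have hrb : n % (2*(j:ℤ)) < 2*j := Int.emod_lt_of_pos n hb
  rw [C_E j hj]; omega

lemma C_surj (j : ℕ) (hj : 0 < j) (m : ℤ) : ∃ n, C j n = m := by
  have hj' : (0:ℤ) < j := by exact_mod_cast hj
  have hb : (0:ℤ) < 2*j := by positivity
  refine ⟨2*j*(m / j) + m % j, ?_⟩
  have hr0 : 0 ≤ m % (j:ℤ) := Int.emod_nonneg m (ne_of_gt hj')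
  have hrb : m % (j:ℤ) < j := Int.emod_lt_of_pos m hj'
  have hd : (j:ℤ) * (m / j) + m % j = m := Int.mul_ediv_add_emod m j
  rw [C_eq j hj]
  have h2 : (2*(j:ℤ)*(m / j) + m % j) / (2*(j:ℤ)) = m / j ∧
      (2*(j:ℤ)*(m / j) + m % j) % (2*(j:ℤ)) = m % j :=
    (Int.ediv_emod_unique hb).mpr ⟨by ring, by omega, by omega⟩
  rw [h2.1, h2.2]
  have : min (m % (j:ℤ)) (j:ℤ) = m % j := by omega
  rw [this]; linarith

theorem stmt15 (j : ℕ) (hj : 0 < j) (s₁ a₁ s₂ a₂ : ℤ)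
    (h : ∀ n : ℤ, C j n = C j (n - s₁ - C j (n - a₁)) + C j (n - s₂ - C j (n - a₂))) :
    (j : ℤ) ∣ s₁ ∧ (j : ℤ) ∣ s₂ ∧ a₁ % (2 * j) = (j : ℤ) % (2 * j) ∧
      a₂ % (2 * j) = (j : ℤ) % (2 * j) ∧ 2 * (s₁ + s₂) = a₁ + a₂ := by
  have hj' : (0:ℤ) < j := by exact_mod_cast hj
  have hb : (0:ℤ) < 2*j := by positivity
  -- Step A: 2 C(n) = f₁(n) + f₂(n) + j
  have star : ∀ n : ℤ,
      2 * C j n = (n - s₁ - C j (n - a₁)) + (n - s₂ - C j (n - a₂)) + j := by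
    intro n
    have h1 := h n
    have h2 := h (n + 2*j)
    have e0 : C j (n + 2*(j:ℤ)) = C j n + j := by
      rw [show n + 2*(j:ℤ) = n + 2*(j:ℤ)*1 by ring, C_shift j hj n 1]; ring
    have ea1 : C j (n + 2*(j:ℤ) - a₁) = C j (n - a₁) + j := by
      rw [show n + 2*(j:ℤ) - a₁ = n - a₁ + 2*(j:ℤ)*1 by ring, C_shift j hj (n - a₁) 1]; ring
    have ea2 : C j (n + 2*(j:ℤ) - a₂) = C j (n - a₂) + j := by
      rw [show n + 2*(j:ℤ) - a₂ = n - a₂ + 2*(j:ℤ)*1 by ring, C_shift j hj (n - a₂) 1]; ring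
    rw [e0, ea1, ea2] at h2
    rw [show n + 2*(j:ℤ) - s₁ - (C j (n - a₁) + j) = (n - s₁ - C j (n - a₁)) + j by ring,
        show n + 2*(j:ℤ) - s₂ - (C j (n - a₂) + j) = (n - s₂ - C j (n - a₂)) + j by ring] at h2
    have herm1 := C_hermite j hj ((n - s₁ - C j (n - a₁)) + j)
    have herm2 := C_hermite j hj ((n - s₂ - C j (n - a₂)) + j)
    rw [add_sub_cancel_right] at herm1 herm2
    linarith
  -- Step B
  have key : ∀ n : ℤ, 2*(2*C j n - n) + (2*C j (n-a₁) - (n-a₁)) + (2*C j (n-a₂) - (n-a₂))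
      = 2*j - 2*(s₁+s₂) + (a₁+a₂) := by
    intro n; have := star n; linarith
  have E0 : 2 * C j (0:ℤ) - 0 = 0 := by
    rw [E_eq_zero j hj]; simp
  have Ej : 2 * C j (j:ℤ) - j = j := by
    rw [E_eq_j j hj]; exact Int.emod_eq_of_lt (by positivity) (by linarith)
  have k0 := key 0
  have kj := key (j:ℤ)
  rw [show (0:ℤ) - a₁ = -a₁ by ring, show (0:ℤ) - a₂ = -a₂ by ring] at k0
  have b1 := E_bounds j hj (-a₁)
  have b2 := E_bounds j hj (-a₂)
  have b3 := E_bounds j hj ((j:ℤ) - a₁)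
  have b4 := E_bounds j hj ((j:ℤ) - a₂)
  have hK : 2*(s₁+s₂) = a₁+a₂ := by linarith
  have hE3 : 2 * C j ((j:ℤ) - a₁) - ((j:ℤ) - a₁) = 0 := by linarith
  have hE4 : 2 * C j ((j:ℤ) - a₂) - ((j:ℤ) - a₂) = 0 := by linarith
  have hm1 : ((j:ℤ) - a₁) % (2*j) = 0 := (E_eq_zero j hj _).mp hE3
  have hm2 : ((j:ℤ) - a₂) % (2*j) = 0 := (E_eq_zero j hj _).mp hE4
  have hd1 : (2*(j:ℤ)) ∣ (a₁ - j) := by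
    have h' := Int.dvd_of_emod_eq_zero hm1
    rw [show a₁ - (j:ℤ) = -((j:ℤ) - a₁) by ring]
    exact dvd_neg.mpr h'
  have hd2 : (2*(j:ℤ)) ∣ (a₂ - j) := by
    have h' := Int.dvd_of_emod_eq_zero hm2
    rw [show a₂ - (j:ℤ) = -((j:ℤ) - a₂) by ring]
    exact dvd_neg.mpr h'
  have hmod1 : a₁ % (2 * j) = (j : ℤ) % (2 * j) :=
    Int.emod_eq_emod_iff_emod_sub_eq_zero.mpr (Int.emod_eq_zero_of_dvd hd1)
  have hmod2 : a₂ % (2 * j) = (j : ℤ) % (2 * j) :=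
    Int.emod_eq_emod_iff_emod_sub_eq_zero.mpr (Int.emod_eq_zero_of_dvd hd2)
  -- Step C
  obtain ⟨t₁, ht₁⟩ := hd1
  obtain ⟨t₂, ht₂⟩ := hd2
  have ha₁ : a₁ = j + 2*j*t₁ := by linarith
  have ha₂ : a₂ = j + 2*j*t₂ := by linarith
  set u₁ : ℤ := s₁ - j*t₁ with hu₁
  set u₂ : ℤ := s₂ - j*t₂ with hu₂
  have husum : u₁ + u₂ = j := by
    have h2u : 2*(u₁ + u₂) = 2*j := by
      rw [hu₁, hu₂]; linear_combination hK + ha₁ + ha₂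
    linarith
  have harg1 : ∀ n : ℤ, C j (n - a₁) = n - C j n - j*t₁ := by
    intro n
    have hs := C_shift j hj (n - j) (-t₁)
    have herm := C_hermite j hj n
    rw [show n - a₁ = n - (j:ℤ) + 2*j*(-t₁) by rw [ha₁]; ring, hs]
    linarith
  have harg2 : ∀ n : ℤ, C j (n - a₂) = n - C j n - j*t₂ := by
    intro n
    have hs := C_shift j hj (n - j) (-t₂)
    have herm := C_hermite j hj n
    rw [show n - a₂ = n - (j:ℤ) + 2*j*(-t₂) by rw [ha₂]; ring, hs]
    linarith
  have hm : ∀ m : ℤ, C j (m - u₁) + C j (m - u₂) = m := by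
    intro m
    obtain ⟨n, hn⟩ := C_surj j hj m
    have h1 := h n
    rw [harg1 n, harg2 n] at h1
    rw [show n - s₁ - (n - C j n - (j:ℤ)*t₁) = C j n - u₁ by rw [hu₁]; ring,
        show n - s₂ - (n - C j n - (j:ℤ)*t₂) = C j n - u₂ by rw [hu₂]; ring] at h1
    rw [← hn]
    linarith
  have C0 : C j (0:ℤ) = 0 := by
    have := E0; omega
  have hdu1 : (j:ℤ) ∣ u₁ := by
    have h1 := hm u₁
    rw [sub_self, C0, show u₁ - u₂ = 2*u₁ - j by omega] at h1
    have hE : 2 * C j (2*u₁ - (j:ℤ)) - (2*u₁ - j) = j := by omega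
    have hmod := (E_eq_j j hj _).mp hE
    have hd : 2*(j:ℤ) * ((2*u₁ - j) / (2*j)) + (2*u₁ - j) % (2*j) = 2*u₁ - j :=
      Int.mul_ediv_add_emod _ _
    rw [hmod] at hd
    exact ⟨(2*u₁ - j) / (2*j) + 1, by linarith⟩
  have hdu2 : (j:ℤ) ∣ u₂ := by
    have h1 := hm u₂
    rw [sub_self, C0, show u₂ - u₁ = 2*u₂ - j by omega] at h1
    have hE : 2 * C j (2*u₂ - (j:ℤ)) - (2*u₂ - j) = j := by omega
    have hmod := (E_eq_j j hj _).mp hE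
    have hd : 2*(j:ℤ) * ((2*u₂ - j) / (2*j)) + (2*u₂ - j) % (2*j) = 2*u₂ - j :=
      Int.mul_ediv_add_emod _ _
    rw [hmod] at hd
    exact ⟨(2*u₂ - j) / (2*j) + 1, by linarith⟩
  refine ⟨?_, ?_, hmod1, hmod2, hK⟩
  · obtain ⟨c, hc⟩ := hdu1
    exact ⟨c + t₁, by rw [show s₁ = u₁ + (j:ℤ)*t₁ by rw [hu₁]; ring, hc]; ring⟩
  · obtain ⟨c, hc⟩ := hdu2
    exact ⟨c + t₂, by rw [show s₂ = u₂ + (j:ℤ)*t₂ by rw [hu₂]; ring, hc]; ring⟩
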